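/- With Ψ(I) = ∏_{i<j∈I}(1+ζ_{ij}) and g(I,J) = (Ψ^{*(−1)} * D_I Ψ)(J) in the convolution algebra on subsets of {1,…,n} (I, J disjoint), and ι a choice function assigning to each nonempty I an element ι(I) ∈ I with I' = I∖{ι(I)}: g satisfies g(∅,J) = δ_{∅,J} and, for I ≠ ∅, g(I,J) = (∏_{i∈I'} (1+ζ_{i,ι(I)})) · Σ_{K⊆J} (∏_{i∈K} ζ_{i,ι(I)}) · g(I' ∪ K, J∖K). -/

import Mathlib

/-- Ordered pairs `(i,j)` with `i < j` and both endpoints in `I`: the possible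
edges of a simple graph on vertex set `I ⊆ Fin n`. -/
def edgesOn (n : ℕ) (I : Finset (Fin n)) : Finset (Fin n × Fin n) :=
  Finset.univ.filter fun p => p.1 < p.2 ∧ p.1 ∈ I ∧ p.2 ∈ I

/-- Simple graphs on vertex set `I`, identified with their edge sets. -/
def graphsOn (n : ℕ) (I : Finset (Fin n)) : Finset (Finset (Fin n × Fin n)) :=
  (edgesOn n I).powerset

/-- Adjacency relation of an edge set. -/
def adjE {n : ℕ} (G : Finset (Fin n × Fin n)) (i j : Fin n) : Prop :=
  (i, j) ∈ G ∨ (j, i) ∈ G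

/-- The edge set `G` makes the (nonempty) vertex set `I` connected. -/
def ConnOn {n : ℕ} (I : Finset (Fin n)) (G : Finset (Fin n × Fin n)) : Prop :=
  I.Nonempty ∧ ∀ i ∈ I, ∀ j ∈ I, Relation.ReflTransGen (adjE G) i j

open Classical in
/-- Connected graphs on the vertex set `I`. -/
noncomputable def connGraphsOn (n : ℕ) (I : Finset (Fin n)) :
    Finset (Finset (Fin n × Fin n)) :=
  (graphsOn n I).filter (ConnOn I)

open Classical in
/-- Trees on the `n` labeled vertices `{1,…,n}`: connected graphs with `n-1` edges. -/
noncomputable def treesOn (n : ℕ) : Finset (Finset (Fin n × Fin n)) :=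
  (connGraphsOn n Finset.univ).filter fun G => G.card = n - 1

/-- Convolution product on the algebra of complex functions on subsets of `{1,…,n}`. -/
noncomputable def conv (n : ℕ) (f g : Finset (Fin n) → ℂ) : Finset (Fin n) → ℂ :=
  fun I => ∑ J ∈ I.powerset, f J * g (I \ J)

/-- The unit of the convolution algebra: the indicator of the empty set. -/
def deltaA (n : ℕ) : Finset (Fin n) → ℂ := fun I => if I = ∅ then 1 else 0

/-- Convolution powers. -/
noncomputable def convPow (n : ℕ) (f : Finset (Fin n) → ℂ) : ℕ → (Finset (Fin n) → ℂ)
  | 0 => deltaA n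
  | k + 1 => conv n f (convPow n f k)

/-- The exponential in the convolution algebra,
`exp_𝒜 f = 1_𝒜 + f + f^{*2}/2! + ⋯ + f^{*n}/n!`. -/
noncomputable def expA (n : ℕ) (f : Finset (Fin n) → ℂ) : Finset (Fin n) → ℂ :=
  fun I => ∑ k ∈ Finset.range (n + 1), (Nat.factorial k : ℂ)⁻¹ * convPow n f k I

/-- `Ψ(I) = ∏_{i<j ∈ I} (1 + ζ_{ij})`. -/
noncomputable def PsiFn (n : ℕ) (ζ : Fin n → Fin n → ℂ) : Finset (Fin n) → ℂ :=
  fun I => ∏ p ∈ edgesOn n I, (1 + ζ p.1 p.2)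

/-- `D_I f(J) = f(I ∪ J)` if `I ∩ J = ∅`, `0` otherwise. -/
noncomputable def DI (n : ℕ) (I : Finset (Fin n)) (f : Finset (Fin n) → ℂ) :
    Finset (Fin n) → ℂ :=
  fun J => if Disjoint I J then f (I ∪ J) else 0

open Finset

lemma conv_comm (n : ℕ) (f g : Finset (Fin n) → ℂ) : conv n f g = conv n g f := by
  funext I
  unfold conv
  refine Finset.sum_nbij' (fun J => I \ J) (fun J => I \ J) ?_ ?_ ?_ ?_ ?_ <;>
    intro a ha <;> simp only [mem_powerset] at *
  · exact sdiff_subset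
  · exact sdiff_subset
  · exact Finset.sdiff_sdiff_eq_self ha
  · exact Finset.sdiff_sdiff_eq_self ha
  · rw [Finset.sdiff_sdiff_eq_self ha, mul_comm]

lemma powerset_sum_comm {n : ℕ} (J : Finset (Fin n)) (F : Finset (Fin n) → Finset (Fin n) → ℂ) :
    ∑ L ∈ J.powerset, ∑ K ∈ (J \ L).powerset, F L K
      = ∑ K ∈ J.powerset, ∑ L ∈ (J \ K).powerset, F L K := by
  rw [Finset.sum_sigma', Finset.sum_sigma']
  refine Finset.sum_nbij' (fun p => ⟨p.2, p.1⟩) (fun p => ⟨p.2, p.1⟩) ?_ ?_ ?_ ?_ ?_ <;>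
    rintro ⟨a, b⟩ h <;>
    simp only [mem_sigma, mem_powerset, subset_sdiff] at * <;> tauto

lemma edgesOn_insert (n : ℕ) (j : Fin n) (S : Finset (Fin n)) (hj : j ∉ S) :
    edgesOn n (insert j S) =
      edgesOn n S ∪ S.image (fun i => if i < j then (i, j) else (j, i)) := by
  ext ⟨a, b⟩
  simp only [edgesOn, mem_filter, mem_univ, true_and, mem_union, mem_insert, mem_image]
  constructor
  · rintro ⟨hab, (rfl | ha), (rfl | hb)⟩
    · exact absurd hab (lt_irrefl _)
    · exact Or.inr ⟨b, hb, by simp [not_lt_of_gt hab]⟩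
    · exact Or.inr ⟨a, ha, by simp [hab]⟩
    · exact Or.inl ⟨hab, ha, hb⟩
  · rintro (⟨hab, ha, hb⟩ | ⟨i, hi, hie⟩)
    · exact ⟨hab, Or.inr ha, Or.inr hb⟩
    · split_ifs at hie with h <;> rw [Prod.mk.injEq] at hie <;>
        obtain ⟨rfl, rfl⟩ := hie
      · exact ⟨h, Or.inr hi, Or.inl rfl⟩
      · exact ⟨lt_of_le_of_ne (not_lt.mp h) (fun he => hj (he ▸ hi)), Or.inl rfl, Or.inr hi⟩

lemma PsiFn_insert (n : ℕ) (ζ : Fin n → Fin n → ℂ) (hsym : ∀ i j, ζ i j = ζ j i)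
    (j : Fin n) (S : Finset (Fin n)) (hj : j ∉ S) :
    PsiFn n ζ (insert j S) = (∏ i ∈ S, (1 + ζ i j)) * PsiFn n ζ S := by
  unfold PsiFn
  rw [edgesOn_insert n j S hj, Finset.prod_union, mul_comm]
  · congr 1
    rw [Finset.prod_image]
    · refine Finset.prod_congr rfl fun i hi => ?_
      by_cases h : i < j <;> simp [h, hsym i j]
    · intro x hx y hy hxy
      beta_reduce at hxy
      split_ifs at hxy <;> rw [Prod.mk.injEq] at hxy
      · exact hxy.1
      · exact absurd (hxy.1 ▸ hx) hj
      · exact absurd (hxy.2 ▸ hx) hj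
      · exact hxy.2
  · rw [Finset.disjoint_left]
    rintro ⟨a, b⟩ hab him
    simp only [edgesOn, mem_filter, mem_univ, true_and] at hab
    simp only [mem_image] at him
    obtain ⟨i, hi, hie⟩ := him
    split_ifs at hie <;> rw [Prod.mk.injEq] at hie <;> obtain ⟨rfl, rfl⟩ := hie
    · exact hj hab.2.2
    · exact hj hab.2.1

/-- the Kirkwood–Salsburg-type equation for
`g(I,J) = (Ψ^{*(-1)} * D_I Ψ)(J)`, where `ι` is a choice function with
`ι(I) ∈ I` and `I' = I ∖ {ι(I)}`. -/
theorem KS_equation (n : ℕ) (ζ : Fin n → Fin n → ℂ) (hsym : ∀ i j, ζ i j = ζ j i)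
    (iota : Finset (Fin n) → Fin n) (hiota : ∀ I, I.Nonempty → iota I ∈ I)
    (invPsi : Finset (Fin n) → ℂ)
    (hinv : conv n (PsiFn n ζ) invPsi = deltaA n) :
    (∀ J : Finset (Fin n),
      conv n invPsi (DI n ∅ (PsiFn n ζ)) J = if J = ∅ then 1 else 0) ∧
    (∀ I J : Finset (Fin n), I.Nonempty → Disjoint I J →
      conv n invPsi (DI n I (PsiFn n ζ)) J =
        (∏ i ∈ I.erase (iota I), (1 + ζ i (iota I))) *
          ∑ K ∈ J.powerset, (∏ i ∈ K, ζ i (iota I)) *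
            conv n invPsi (DI n (I.erase (iota I) ∪ K) (PsiFn n ζ)) (J \ K)) := by
  classical
  constructor
  · intro J
    have hD : DI n (∅ : Finset (Fin n)) (PsiFn n ζ) = PsiFn n ζ := by
      funext J'; simp [DI]
    rw [hD, conv_comm, hinv]
    rfl
  · intro I J hne hdisj
    set j := iota I with hjdef
    set I' := I.erase j with hI'
    have hjI : j ∈ I := hiota I hne
    have hjJ : j ∉ J := Finset.disjoint_left.mp hdisj hjI
    have hI'sub : I' ⊆ I := Finset.erase_subset _ _
    set C : ℂ := ∏ i ∈ I', (1 + ζ i j) with hC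
    set G : Finset (Fin n) → Finset (Fin n) → ℂ := fun L K =>
      C * ((∏ i ∈ K, ζ i j) * (invPsi L * PsiFn n ζ ((I' ∪ K) ∪ ((J \ K) \ L)))) with hG
    have step1 : conv n invPsi (DI n I (PsiFn n ζ)) J
        = ∑ L ∈ J.powerset, ∑ K ∈ (J \ L).powerset, G L K := by
      unfold conv
      refine Finset.sum_congr rfl fun L hL => ?_
      rw [Finset.mem_powerset] at hL
      have hd1 : Disjoint I (J \ L) := hdisj.mono_right sdiff_subset
      have hd2 : Disjoint I' (J \ L) := Disjoint.mono hI'sub sdiff_subset hdisj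
      have hjnot : j ∉ I' ∪ (J \ L) := by
        rw [Finset.mem_union, hI']
        push_neg
        exact ⟨Finset.notMem_erase j I, fun h => absurd (Finset.mem_sdiff.mp h).1 hjJ⟩
      have hDI : DI n I (PsiFn n ζ) (J \ L) = PsiFn n ζ (I ∪ (J \ L)) := by
        simp only [DI, if_pos hd1]
      have hunion : I ∪ (J \ L) = insert j (I' ∪ (J \ L)) := by
        ext x
        simp only [Finset.mem_union, Finset.mem_insert, hI', Finset.mem_erase,
          Finset.mem_sdiff]
        by_cases hx : x = j
        · subst hx; simp [hjI]
        · tauto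
      have hexp : ∏ i ∈ J \ L, (1 + ζ i j) = ∑ K ∈ (J \ L).powerset, ∏ i ∈ K, ζ i j := by
        simp only [add_comm (1 : ℂ)]
        rw [Finset.prod_add]
        simp
      rw [hDI, hunion, PsiFn_insert n ζ hsym j _ hjnot, Finset.prod_union hd2, hexp,
        Finset.mul_sum, Finset.sum_mul, Finset.mul_sum]
      refine Finset.sum_congr rfl fun K hK => ?_
      have hKs : K ⊆ J \ L := Finset.mem_powerset.mp hK
      have huk : I' ∪ (J \ L) = (I' ∪ K) ∪ ((J \ K) \ L) := by
        ext x
        simp only [Finset.mem_union, Finset.mem_sdiff]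
        have hx : x ∈ K → x ∈ J ∧ x ∉ L := fun h => Finset.mem_sdiff.mp (hKs h)
        tauto
      rw [huk, hG]
      ring
    rw [step1, powerset_sum_comm, Finset.mul_sum]
    refine Finset.sum_congr rfl fun K hK => ?_
    have hKJ : K ⊆ J := Finset.mem_powerset.mp hK
    unfold conv
    rw [Finset.mul_sum, Finset.mul_sum]
    refine Finset.sum_congr rfl fun L hL => ?_
    have hdisj2 : Disjoint (I' ∪ K) ((J \ K) \ L) := by
      rw [Finset.disjoint_union_left]
      constructor
      · exact Disjoint.mono hI'sub (sdiff_subset.trans sdiff_subset) hdisj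
      · exact (Finset.sdiff_disjoint.symm).mono_right sdiff_subset
    simp only [DI, if_pos hdisj2, hG]
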